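/- Let X be a real normed space, M : X → X* bounded linear, self-adjoint and positive semi-definite, and (x^k)_{k≥0} ⊂ X with v^{k+1} := −M(x^{k+1} − x^k). Let x̄ ∈ X, δ > 0, γ ≥ 0, η ≥ 0, Λ̆ self-adjoint with 0 ≤ Λ̆ ≤ (1−η)M, (ε_k) ⊂ ℝ and p ∈ (1, 1+2γ]. Suppose that whenever x^0, …, x^k ∈ 𝔒_M(x̄, δ), ⟨v^{k+1}, x^{k+1} − x̄⟩ ≥ γ ‖x^{k+1} − x̄‖_M² − (1/2)‖x^{k+1} − x^k‖_{Λ̆}² − ε_k; that s := sup_{N∈ℕ} Σ_{k=0}^{N−1} p^k ε_k satisfies s < δ²/2; and that x^0 ∈ 𝔒_M(x̄, √(δ² − 2s)). Then for every N ≥ 0: p^N ‖x^N − x̄‖_M² ≤ ‖x^0 − x̄‖_M² + 2s; in particular ‖x^N − x̄‖_M² → 0 at the linear rate O(p^{−N}). -/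

import Mathlib

open Filter

theorem stmt15 {X : Type*} [NormedAddCommGroup X] [NormedSpace ℝ X]
    (M : X →L[ℝ] StrongDual ℝ X)
    (hMsa : ∀ u v : X, M u v = M v u) (hMpsd : ∀ u : X, 0 ≤ M u u)
    (x : ℕ → X) (xb : X) (δ γ η : ℝ)
    (hδ : 0 < δ) (hγ : 0 ≤ γ) (hη : 0 ≤ η)
    (Λb : X →L[ℝ] StrongDual ℝ X)
    (hΛbsa : ∀ u v : X, Λb u v = Λb v u)
    (hΛbpsd : ∀ u : X, 0 ≤ Λb u u)
    (hΛbM : ∀ u : X, Λb u u ≤ (1 - η) * M u u)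
    (ε : ℕ → ℝ) (p : ℝ) (hp1 : 1 < p) (hpγ : p ≤ 1 + 2 * γ)
    (hdesc : ∀ k : ℕ, (∀ n ≤ k, Real.sqrt (M (x n - xb) (x n - xb)) < δ) →
      γ * M (x (k + 1) - xb) (x (k + 1) - xb)
          - (1 / 2) * Λb (x (k + 1) - x k) (x (k + 1) - x k) - ε k
        ≤ (-(M (x (k + 1) - x k))) (x (k + 1) - xb))
    (s : ℝ)
    (hs : ∀ N : ℕ, ∑ k ∈ Finset.range N, p ^ k * ε k ≤ s)
    (hsδ : s < δ ^ 2 / 2)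
    (hx0 : Real.sqrt (M (x 0 - xb) (x 0 - xb)) < Real.sqrt (δ ^ 2 - 2 * s)) :
    (∀ N : ℕ, p ^ N * M (x N - xb) (x N - xb) ≤ M (x 0 - xb) (x 0 - xb) + 2 * s)
    ∧ Tendsto (fun N : ℕ => M (x N - xb) (x N - xb)) atTop (nhds 0) := by
  have hp0 : 0 < p := lt_trans one_pos hp1
  have hs0 : 0 ≤ s := by simpa using hs 0
  have hδ2 : 0 ≤ δ ^ 2 - 2 * s := by nlinarith
  have ha0 : M (x 0 - xb) (x 0 - xb) < δ ^ 2 - 2 * s := by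
    have := hMpsd (x 0 - xb)
    nlinarith [Real.sq_sqrt this, Real.sq_sqrt hδ2, Real.sqrt_nonneg (M (x 0 - xb) (x 0 - xb)),
      Real.sqrt_nonneg (δ ^ 2 - 2 * s)]
  have key : ∀ N : ℕ, (∀ n ≤ N, Real.sqrt (M (x n - xb) (x n - xb)) < δ) ∧
      p ^ N * M (x N - xb) (x N - xb) ≤
        M (x 0 - xb) (x 0 - xb) + 2 * ∑ k ∈ Finset.range N, p ^ k * ε k := by
    intro N
    induction N with
    | zero =>
      refine ⟨fun n hn => ?_, by simp⟩
      interval_cases n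
      calc Real.sqrt (M (x 0 - xb) (x 0 - xb)) < Real.sqrt (δ ^ 2 - 2 * s) := hx0
        _ ≤ Real.sqrt (δ ^ 2) := Real.sqrt_le_sqrt (by linarith)
        _ = δ := by rw [Real.sqrt_sq hδ.le]
    | succ N ih =>
      obtain ⟨hball, hbound⟩ := ih
      have hd := hdesc N hball
      obtain ⟨u, hu⟩ : ∃ u, u = x (N + 1) - xb := ⟨_, rfl⟩
      obtain ⟨w, hw⟩ : ∃ w, w = x N - xb := ⟨_, rfl⟩
      have hdw : x (N + 1) - x N = u - w := by rw [hu, hw]; abel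
      rw [hdw, ← hu] at hd
      rw [← hw] at hbound
      have e1 : (M (u - w)) u = M u u - M w u := by
        rw [map_sub, ContinuousLinearMap.sub_apply]
      have e1' : (M (u - w)) w = M u w - M w w := by
        rw [map_sub, ContinuousLinearMap.sub_apply]
      have e2 : (M (u - w)) (u - w) = M u u - 2 * M w u + M w w := by
        rw [map_sub, e1, e1', hMsa u w]
        ring
      have hMdd : 0 ≤ M u u - 2 * M w u + M w w := e2 ▸ hMpsd (u - w)
      have hΛdd : Λb (u - w) (u - w) ≤ M u u - 2 * M w u + M w w := by
        have h1 := hΛbM (u - w)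
        rw [e2] at h1
        nlinarith [mul_nonneg hη hMdd]
      have hd' : γ * M u u - (1 / 2) * Λb (u - w) (u - w) - ε N
          ≤ -(M u u - M w u) := by
        rwa [ContinuousLinearMap.neg_apply, e1] at hd
      have hMuu := hMpsd u
      have step : (1 + 2 * γ) * M u u ≤ M w w + 2 * ε N := by linarith
      have hstep2 : p * M u u ≤ M w w + 2 * ε N := by nlinarith
      have hpN : (0:ℝ) < p ^ N := pow_pos hp0 N
      have h4 : p ^ (N + 1) * M u u ≤ p ^ N * M w w + 2 * (p ^ N * ε N) := by
        calc p ^ (N + 1) * M u u = p ^ N * (p * M u u) := by ring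
          _ ≤ p ^ N * (M w w + 2 * ε N) := mul_le_mul_of_nonneg_left hstep2 hpN.le
          _ = p ^ N * M w w + 2 * (p ^ N * ε N) := by ring
      have hbound' : p ^ (N + 1) * M u u ≤
          M (x 0 - xb) (x 0 - xb) + 2 * ∑ k ∈ Finset.range (N + 1), p ^ k * ε k := by
        rw [Finset.sum_range_succ]
        linarith
      rw [hu] at hbound'
      refine ⟨fun n hn => ?_, hbound'⟩
      rcases Nat.lt_succ_iff_lt_or_eq.mp (Nat.lt_succ_of_le hn) with h | h
      · exact hball n (Nat.lt_succ_iff.mp h)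
      · subst h
        rw [← hu]
        have hsum := hs (N + 1)
        have hp1N : (1:ℝ) ≤ p ^ (N + 1) := one_le_pow₀ hp1.le
        have hA : M u u ≤ p ^ (N + 1) * M u u := le_mul_of_one_le_left hMuu hp1N
        rw [← hu] at hbound'
        have : M u u < δ ^ 2 := by linarith
        calc Real.sqrt (M u u) < Real.sqrt (δ ^ 2) := Real.sqrt_lt_sqrt hMuu this
          _ = δ := by rw [Real.sqrt_sq hδ.le]
  constructor
  · intro N
    have := (key N).2
    have hsum := hs N
    linarith
  · have hb : ∀ N : ℕ, M (x N - xb) (x N - xb) ≤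
        (M (x 0 - xb) (x 0 - xb) + 2 * s) * (1 / p) ^ N := by
      intro N
      have h1 := (key N).2
      have hsum := hs N
      have hpN : (0:ℝ) < p ^ N := pow_pos hp0 N
      rw [one_div, inv_pow, ← div_eq_mul_inv, le_div_iff₀ hpN, mul_comm]
      linarith
    have hlim : Tendsto (fun N : ℕ =>
        (M (x 0 - xb) (x 0 - xb) + 2 * s) * (1 / p) ^ N) atTop (nhds 0) := by
      have h : Tendsto (fun N : ℕ => (1 / p) ^ N) atTop (nhds 0) := by
        apply tendsto_pow_atTop_nhds_zero_of_lt_one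
        · positivity
        · rw [div_lt_one hp0]; exact hp1
      simpa using h.const_mul (M (x 0 - xb) (x 0 - xb) + 2 * s)
    exact tendsto_of_tendsto_of_tendsto_of_le_of_le tendsto_const_nhds hlim
      (fun N => hMpsd (x N - xb)) hb
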